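/- Let X be a complex Banach space, let f ∈ X* with f ≠ 0, and let g ∈ X* be such that for all x ∈ X, if Re f(x) < 0 then Re g(x) ≥ 0. Then ker(f) ⊆ ker(g), and moreover there exists a real number a ≤ 0 such that g = a·f. -/
import Mathlib


open Filter Topology

/-- Remark 2.8: if f ≠ 0 and Re f(x) < 0 implies Re g(x) ≥ 0 for all x, then
ker(f) ⊆ ker(g) and g = a·f for some real a ≤ 0. -/
theorem ker_subset_and_eq_nonpos_smul
    {X : Type*} [NormedAddCommGroup X] [NormedSpace ℂ X]
    (f g : X →L[ℂ] ℂ) (hf : f ≠ 0)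
    (h : ∀ x : X, (f x).re < 0 → 0 ≤ (g x).re) :
    (∀ x : X, f x = 0 → g x = 0) ∧ ∃ a : ℝ, a ≤ 0 ∧ g = (a : ℂ) • f := by
  obtain ⟨x0, hx0⟩ : ∃ x, f x ≠ 0 := by
    by_contra hc; push_neg at hc
    exact hf (ContinuousLinearMap.ext fun x => by simp [hc x])
  set y : X := (f x0)⁻¹ • x0 with hy
  have hfy : f y = 1 := by simp [hy, inv_mul_cancel₀ hx0]
  have hker : ∀ x : X, f x = 0 → g x = 0 := by
    intro x hx
    by_contra hgx
    have key : ∀ c : ℂ, 0 ≤ (c * g x).re + (g (-y)).re := by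
      intro c
      have hre : (f (c • x + -y)).re < 0 := by
        simp [hx, hfy]
      have := h _ hre
      simpa [map_add, Complex.add_re] using this
    have hnsq : Complex.normSq (g x) ≠ 0 := by
      simpa [Complex.normSq_eq_zero] using hgx
    set t : ℝ := (1 + |(g (-y)).re|) / Complex.normSq (g x) with ht
    have hkey := key (-(t : ℂ) * (starRingEnd ℂ) (g x))
    have hmul : (-(t : ℂ) * (starRingEnd ℂ) (g x) * g x).re
        = -(t * Complex.normSq (g x)) := by
      have : (starRingEnd ℂ) (g x) * g x = (Complex.normSq (g x) : ℂ) := by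
        rw [mul_comm]; exact Complex.mul_conj (g x)
      rw [mul_assoc, this]
      simp [Complex.ofReal_mul]
    rw [hmul] at hkey
    have htv : t * Complex.normSq (g x) = 1 + |(g (-y)).re| := by
      rw [ht, div_mul_cancel₀ _ hnsq]
    rw [htv] at hkey
    have := le_abs_self (g (-y)).re
    linarith
  refine ⟨hker, ?_⟩
  set a : ℂ := g y with ha
  have hgx : ∀ x : X, g x = a * f x := by
    intro x
    have h0 : f (x - f x • y) = 0 := by simp [hfy]
    have := hker _ h0
    simp only [map_sub, map_smul, smul_eq_mul, sub_eq_zero] at this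
    rw [this, ha, mul_comm]
  have hare : a.re ≤ 0 := by
    have hre : (f (-y)).re < 0 := by simp [hfy]
    have := h _ hre
    rw [hgx (-y)] at this
    simp [hfy] at this
    linarith
  have haim : a.im = 0 := by
    by_contra him
    set c : ℂ := -1 + ((1 - a.re) / a.im) * Complex.I with hc
    have hre : (f (c • y)).re < 0 := by
      simp [hfy, hc]
    have h2 := h _ hre
    rw [hgx (c • y)] at h2
    simp only [map_smul, hfy, smul_eq_mul, mul_one] at h2
    have hmc : (a * c).re = -1 := by
      rw [hc]
      simp [Complex.mul_re]
      field_simp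
      ring
    rw [hmc] at h2
    linarith
  refine ⟨a.re, hare, ?_⟩
  ext x
  have hac : a = (a.re : ℂ) := by
    apply Complex.ext <;> simp [haim]
  rw [ContinuousLinearMap.smul_apply, hgx x, hac]
  simp
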